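/- Let H be a Hilbert space, P₁, P₂ orthogonal projections such that T := P₂P₁ + (Id - P₂)(Id - P₁) is Fredholm. Then P₂P₁ : ran(P₁) → ran(P₂) is Fredholm, with kernel equal to ker(T) ∩ ran(P₁) and range equal to ran(T) ∩ ran(P₂). -/

import Mathlib

/-- if T = P₂P₁ + (Id−P₂)(Id−P₁) is Fredholm, then P₂P₁ : ran P₁ → ran P₂ is
    Fredholm, with kernel ker T ∩ ran P₁ and range ran T ∩ ran P₂. -/
theorem projections_fredholm
    {H : Type*} [NormedAddCommGroup H] [InnerProductSpace ℂ H] [CompleteSpace H]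
    (P₁ P₂ : H →L[ℂ] H)
    (h1idem : IsIdempotentElem P₁) (h2idem : IsIdempotentElem P₂)
    (h1sa : IsSelfAdjoint P₁) (h2sa : IsSelfAdjoint P₂)
    (T : H →L[ℂ] H)
    (hT : T = P₂.comp P₁ + (1 - P₂).comp (1 - P₁))
    (hTker : FiniteDimensional ℂ (LinearMap.ker (T : H →ₗ[ℂ] H)))
    (hTcoker : FiniteDimensional ℂ (H ⧸ LinearMap.range (T : H →ₗ[ℂ] H)))
    (f : LinearMap.range (P₁ : H →ₗ[ℂ] H) →ₗ[ℂ] LinearMap.range (P₂ : H →ₗ[ℂ] H))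
    (hf : ∀ x : LinearMap.range (P₁ : H →ₗ[ℂ] H), (f x : H) = P₂ (P₁ x)) :
    LinearMap.ker f = (LinearMap.ker (T : H →ₗ[ℂ] H) ⊓ LinearMap.range (P₁ : H →ₗ[ℂ] H)).comap (LinearMap.range (P₁ : H →ₗ[ℂ] H)).subtype ∧
    LinearMap.range f
      = (LinearMap.range (T : H →ₗ[ℂ] H) ⊓ LinearMap.range (P₂ : H →ₗ[ℂ] H)).comap
        (LinearMap.range (P₂ : H →ₗ[ℂ] H)).subtype ∧
    FiniteDimensional ℂ (LinearMap.ker f) ∧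
    FiniteDimensional ℂ (↥(LinearMap.range (P₂ : H →ₗ[ℂ] H)) ⧸ LinearMap.range f) := by
  have h1fix : ∀ x ∈ LinearMap.range (P₁ : H →ₗ[ℂ] H), P₁ x = x := by
    rintro _ ⟨y, rfl⟩
    have := DFunLike.congr_fun h1idem.eq y
    simpa [ContinuousLinearMap.mul_apply] using this
  have h2fix : ∀ x ∈ LinearMap.range (P₂ : H →ₗ[ℂ] H), P₂ x = x := by
    rintro _ ⟨y, rfl⟩
    have := DFunLike.congr_fun h2idem.eq y
    simpa [ContinuousLinearMap.mul_apply] using this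
  -- T x = P₂ (P₁ x) for x ∈ ran P₁
  have hTx : ∀ x : LinearMap.range (P₁ : H →ₗ[ℂ] H), T (x : H) = P₂ (P₁ (x : H)) := by
    rintro ⟨x, hx⟩
    simp [hT, ContinuousLinearMap.add_apply, ContinuousLinearMap.comp_apply,
      ContinuousLinearMap.sub_apply, ContinuousLinearMap.one_apply, h1fix x hx]
  -- P₂ (T z) = P₂ (P₁ z) for all z
  have hP2T : ∀ z : H, P₂ (T z) = P₂ (P₁ z) := by
    intro z
    have h2 : ∀ a : H, P₂ (P₂ a) = P₂ a := by
      intro a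
      have := DFunLike.congr_fun h2idem.eq a
      simpa [ContinuousLinearMap.mul_apply] using this
    simp [hT, ContinuousLinearMap.add_apply, ContinuousLinearMap.comp_apply,
      ContinuousLinearMap.sub_apply, ContinuousLinearMap.one_apply, map_add, map_sub, h2]
  have hker : LinearMap.ker f
      = (LinearMap.ker (T : H →ₗ[ℂ] H) ⊓ LinearMap.range (P₁ : H →ₗ[ℂ] H)).comap (LinearMap.range (P₁ : H →ₗ[ℂ] H)).subtype := by
    ext x
    simp only [LinearMap.mem_ker, Submodule.mem_comap, Submodule.mem_inf,
      Submodule.coe_subtype, LinearMap.mem_ker]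
    constructor
    · intro hx
      refine ⟨?_, x.2⟩
      rw [ContinuousLinearMap.coe_coe, hTx x, ← hf x, hx]
      rfl
    · rintro ⟨hx, -⟩
      have : (f x : H) = 0 := by rw [hf x, ← hTx x, ← ContinuousLinearMap.coe_coe T, hx]
      exact Subtype.ext this
  have hrange : LinearMap.range f
      = (LinearMap.range (T : H →ₗ[ℂ] H) ⊓ LinearMap.range (P₂ : H →ₗ[ℂ] H)).comap (LinearMap.range (P₂ : H →ₗ[ℂ] H)).subtype := by
    ext y
    simp only [LinearMap.mem_range, Submodule.mem_comap, Submodule.mem_inf,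
      Submodule.coe_subtype]
    constructor
    · rintro ⟨x, rfl⟩
      exact ⟨⟨x, (hTx x ▸ (hf x).symm : T (x:H) = f x)⟩, (f x).2⟩
    · rintro ⟨⟨z, hz⟩, -⟩
      refine ⟨⟨P₁ z, ⟨z, rfl⟩⟩, ?_⟩
      apply Subtype.ext
      rw [hf]
      have hfix : P₁ (P₁ z) = P₁ z := h1fix _ ⟨z, rfl⟩
      rw [hfix, ← hP2T z, ← ContinuousLinearMap.coe_coe T, hz, h2fix _ y.2]
  refine ⟨hker, hrange, ?_, ?_⟩
  · rw [hker]
    have hle : LinearMap.ker (T : H →ₗ[ℂ] H) ⊓ LinearMap.range (P₁ : H →ₗ[ℂ] H) ≤ LinearMap.range (P₁ : H →ₗ[ℂ] H) := inf_le_right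
    have e := Submodule.comapSubtypeEquivOfLe hle
    have : FiniteDimensional ℂ (LinearMap.ker (T : H →ₗ[ℂ] H) ⊓ LinearMap.range (P₁ : H →ₗ[ℂ] H) : Submodule ℂ H) :=
      Submodule.finiteDimensional_inf_left _ _
    exact Module.Finite.equiv e.symm
  · -- cokernel
    set g : H →ₗ[ℂ] ↥(LinearMap.range (P₂ : H →ₗ[ℂ] H)) ⧸ LinearMap.range f :=
      (LinearMap.range f).mkQ.comp (P₂.toLinearMap.codRestrict (LinearMap.range (P₂ : H →ₗ[ℂ] H))
        (fun x => ⟨x, rfl⟩)) with hg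
    have hTle : LinearMap.range (T : H →ₗ[ℂ] H) ≤ LinearMap.ker g := by
      rintro _ ⟨z, rfl⟩
      simp only [hg, LinearMap.mem_ker, LinearMap.comp_apply, Submodule.mkQ_apply]
      rw [Submodule.Quotient.mk_eq_zero]
      refine ⟨⟨P₁ z, ⟨z, rfl⟩⟩, Subtype.ext ?_⟩
      rw [hf]
      have hfix : P₁ (P₁ z) = P₁ z := h1fix _ ⟨z, rfl⟩
      show P₂ (P₁ (P₁ z)) = P₂ (T z)
      rw [hfix, hP2T z]
    have hsurj : Function.Surjective g := by
      intro q
      obtain ⟨y, rfl⟩ := Submodule.mkQ_surjective _ q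
      refine ⟨(y : H), ?_⟩
      simp only [hg, LinearMap.comp_apply, Submodule.mkQ_apply, LinearMap.codRestrict_apply]
      congr 1
      exact Subtype.ext (h2fix _ y.2)
    have hsurj' : Function.Surjective ((LinearMap.range (T : H →ₗ[ℂ] H)).liftQ g hTle) := by
      intro q
      obtain ⟨y, hy⟩ := hsurj q
      exact ⟨Submodule.Quotient.mk y, by rwa [Submodule.liftQ_apply]⟩
    exact Module.Finite.of_surjective _ hsurj'
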